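/- arXiv:1606.08831 — 2 statements merged into one kernel-verified Lean document; each statement's English description precedes it below -/
import Mathlib

section
/- Let L be a lattice in ℝ^d and let (Bₙ) be the sequence of centered cubes [-n,n]^d. Then the normalised finite autocorrelation measures γₙ = (1/vol(Bₙ)) · (δ_L|_{Bₙ}) * (δ_L|_{-Bₙ})~ converge vaguely as n → ∞ to dens(L) · δ_L; i.e., for every continuous compactly supported f : ℝ^d → ℂ, (1/vol(Bₙ)) ∑_{x,y ∈ L∩Bₙ} f(x - y) → dens(L) · ∑_{z ∈ L} f(z). -/
open MeasureTheory Filter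
open Metric Pointwise

lemma aux_span_top {d : ℕ} (L : AddSubgroup (Fin d → ℝ))
    (hcompact : CompactSpace ((Fin d → ℝ) ⧸ L)) :
    Submodule.span ℝ (L : Set (Fin d → ℝ)) = ⊤ := by
  by_contra h
  obtain ⟨φ, hφ0, hφ⟩ := Submodule.exists_dual_map_eq_bot_of_lt_top
    (lt_top_iff_ne_top.mpr h) inferInstance
  have hker : ∀ x ∈ L, φ x = 0 := by
    intro x hx
    have : φ x ∈ Submodule.map φ (Submodule.span ℝ (L : Set (Fin d → ℝ))) :=
      Submodule.mem_map_of_mem (Submodule.subset_span hx)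
    rw [hφ] at this
    simpa using this
  let ψ : (Fin d → ℝ) ⧸ L →+ ℝ := QuotientAddGroup.lift L φ.toAddMonoidHom hker
  have hcont : Continuous ψ := by
    apply continuous_quot_lift
    exact φ.continuous_of_finiteDimensional
  have hsurj : Function.Surjective ψ := by
    obtain ⟨x, hx⟩ : ∃ x, φ x ≠ 0 := by
      by_contra hc
      push_neg at hc
      exact hφ0 (LinearMap.ext fun x => hc x)
    intro r
    refine ⟨QuotientAddGroup.mk ((r / φ x) • x), ?_⟩
    show φ ((r / φ x) • x) = r
    rw [_root_.map_smul, smul_eq_mul, div_mul_cancel₀ _ hx]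
  have : IsCompact (Set.univ : Set ℝ) := by
    rw [← Set.range_eq_univ.mpr hsurj, ← Set.image_univ]
    exact CompactSpace.isCompact_univ.image hcont
  exact noncompact_univ ℝ this

lemma aux_sandwich {d : ℕ} (L : AddSubgroup (Fin d → ℝ)) (hdisc : DiscreteTopology L)
    (hspan : Submodule.span ℝ (L : Set (Fin d → ℝ)) = ⊤) :
    ∃ D : Set (Fin d → ℝ), IsAddFundamentalDomain L D volume ∧ volume D ≠ 0 ∧ volume D ≠ ⊤ ∧
    ∃ R : ℝ, 0 ≤ R ∧ ∀ r : ℝ,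
      volume (closedBall (0 : Fin d → ℝ) (r - R)) ≤
        (Nat.card ↥((L : Set (Fin d → ℝ)) ∩ closedBall 0 r)) * volume D ∧
      (Nat.card ↥((L : Set (Fin d → ℝ)) ∩ closedBall 0 r) : ENNReal) * volume D ≤
        volume (closedBall (0 : Fin d → ℝ) (r + R)) := by
  classical
  set L' : Submodule ℤ (Fin d → ℝ) := AddSubgroup.toIntSubmodule L with hL'
  haveI : DiscreteTopology L' := hdisc
  haveI : IsZLattice ℝ L' := ⟨by rwa [AddSubgroup.coe_toIntSubmodule]⟩
  let b : Module.Basis _ ℤ L' := Module.Free.chooseBasis ℤ L'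
  let bR := Module.Basis.ofZLatticeBasis ℝ L' b
  set D := ZSpan.fundamentalDomain bR with hD
  have hDmeas : MeasurableSet D := ZSpan.fundamentalDomain_measurableSet bR
  obtain ⟨R0, hR0⟩ := (ZSpan.fundamentalDomain_isBounded bR).subset_closedBall 0
  set R := max R0 0 with hR
  have hDR : D ⊆ closedBall 0 R := hR0.trans (closedBall_subset_closedBall (le_max_left _ _))
  have hgrp : (Submodule.span ℤ (Set.range ⇑bR)).toAddSubgroup = L := by
    rw [Module.Basis.ofZLatticeBasis_span]
    exact AddSubgroup.toIntSubmodule_toAddSubgroup L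
  have hfund : IsAddFundamentalDomain L D volume := by
    rw [← hgrp]
    exact ZSpan.isAddFundamentalDomain' bR volume
  have hmemspan : ∀ x : Fin d → ℝ, x ∈ Submodule.span ℤ (Set.range bR) ↔ x ∈ L := by
    intro x
    rw [Module.Basis.ofZLatticeBasis_span, hL']
    exact Iff.rfl
  refine ⟨D, hfund, ZSpan.measure_fundamentalDomain_ne_zero bR,
    ((ZSpan.fundamentalDomain_isBounded bR).measure_lt_top).ne, R, le_max_right _ _, fun r => ?_⟩
  set S : Set (Fin d → ℝ) := (L : Set (Fin d → ℝ)) ∩ closedBall 0 r with hS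
  have hSfin : S.Finite := by
    have hcomp : IsCompact S := (isCompact_closedBall _ _).inter_left L.isClosed_of_discrete
    exact hcomp.finite (isDiscrete_iff_discreteTopology.mpr (hdisc.of_subset Set.inter_subset_left))
  haveI := hSfin.to_subtype
  have hdisj : Pairwise (Function.onFun Disjoint fun x : ↥S => (x : Fin d → ℝ) +ᵥ D) := by
    intro x y hxy
    rw [Function.onFun, Set.disjoint_left]
    rintro v hvx hvy
    obtain ⟨_, hu1, hu2⟩ := ZSpan.exist_unique_vadd_mem_fundamentalDomain bR v
    have hx' : (-(x : Fin d → ℝ)) ∈ Submodule.span ℤ (Set.range bR) :=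
      (hmemspan _).mpr (neg_mem x.2.1)
    have hy' : (-(y : Fin d → ℝ)) ∈ Submodule.span ℤ (Set.range bR) :=
      (hmemspan _).mpr (neg_mem y.2.1)
    have e1 : (⟨-(x : Fin d → ℝ), hx'⟩ : Submodule.span ℤ (Set.range bR)) = _ :=
      hu2 _ (by rw [Set.mem_vadd_set_iff_neg_vadd_mem] at hvx; exact hvx)
    have e2 : (⟨-(y : Fin d → ℝ), hy'⟩ : Submodule.span ℤ (Set.range bR)) = _ :=
      hu2 _ (by rw [Set.mem_vadd_set_iff_neg_vadd_mem] at hvy; exact hvy)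
    apply hxy
    have := e1.trans e2.symm
    rw [Subtype.mk_eq_mk, neg_inj] at this
    exact Subtype.ext this
  have hmeas : ∀ x : ↥S, MeasurableSet ((x : Fin d → ℝ) +ᵥ D) :=
    fun x => hDmeas.const_vadd _
  have hunion : volume (⋃ x : ↥S, (x : Fin d → ℝ) +ᵥ D) = (Nat.card ↥S : ENNReal) * volume D := by
    haveI := hSfin.fintype
    rw [measure_iUnion hdisj hmeas]
    simp only [measure_vadd]
    rw [tsum_fintype]
    simp [Finset.sum_const, Nat.card_eq_fintype_card, nsmul_eq_mul, mul_comm]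
  constructor
  · rw [← hunion]
    apply measure_mono
    intro v hv
    have hvnorm : ‖v‖ ≤ r - R := mem_closedBall_zero_iff.mp hv
    have hfl : ((ZSpan.floor bR v : Fin d → ℝ)) ∈ L := (hmemspan _).mp (ZSpan.floor bR v).2
    have hfract : ZSpan.fract bR v ∈ D := ZSpan.fract_mem_fundamentalDomain bR v
    have hnormf : ‖ZSpan.fract bR v‖ ≤ R := mem_closedBall_zero_iff.mp (hDR hfract)
    have hxnorm : ‖(ZSpan.floor bR v : Fin d → ℝ)‖ ≤ r := by
      have : (ZSpan.floor bR v : Fin d → ℝ) = v - ZSpan.fract bR v := by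
        rw [ZSpan.fract_apply]; ring
      rw [this]
      calc ‖v - ZSpan.fract bR v‖ ≤ ‖v‖ + ‖ZSpan.fract bR v‖ := norm_sub_le _ _
        _ ≤ (r - R) + R := add_le_add hvnorm hnormf
        _ = r := by ring
    refine Set.mem_iUnion.mpr ⟨⟨_, hfl, mem_closedBall_zero_iff.mpr hxnorm⟩, ?_⟩
    refine ⟨ZSpan.fract bR v, hfract, ?_⟩
    show (ZSpan.floor bR v : Fin d → ℝ) + ZSpan.fract bR v = v
    rw [ZSpan.fract_apply]; ring
  · rw [← hunion]
    apply measure_mono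
    intro v hv
    obtain ⟨x, hx⟩ := Set.mem_iUnion.mp hv
    obtain ⟨w, hw, rfl⟩ := hx
    have h1 : ‖(x : Fin d → ℝ)‖ ≤ r := mem_closedBall_zero_iff.mp x.2.2
    have h2 : ‖w‖ ≤ R := mem_closedBall_zero_iff.mp (hDR hw)
    have : ‖(x : Fin d → ℝ) + w‖ ≤ r + R := (norm_add_le _ _).trans (add_le_add h1 h2)
    exact mem_closedBall_zero_iff.mpr this

lemma aux_tendsto {d : ℕ} (L : AddSubgroup (Fin d → ℝ)) (D : Set (Fin d → ℝ))
    (hD0 : volume D ≠ 0) (hDtop : volume D ≠ ⊤) (R : ℝ) (hR : 0 ≤ R)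
    (hbound : ∀ r : ℝ,
      volume (closedBall (0 : Fin d → ℝ) (r - R)) ≤
        (Nat.card ↥((L : Set (Fin d → ℝ)) ∩ closedBall 0 r)) * volume D ∧
      (Nat.card ↥((L : Set (Fin d → ℝ)) ∩ closedBall 0 r) : ENNReal) * volume D ≤
        volume (closedBall (0 : Fin d → ℝ) (r + R)))
    (c : ℝ) :
    Tendsto (fun n : ℕ =>
        (Nat.card ↥((L : Set (Fin d → ℝ)) ∩ closedBall 0 ((n : ℝ) - c)) : ℝ) / (2 * (n : ℝ)) ^ d)
      atTop (nhds ((volume D).toReal)⁻¹) := by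
  set κ := (volume D).toReal with hκ
  have hκpos : 0 < κ := ENNReal.toReal_pos hD0 hDtop
  set N : ℕ → ℝ := fun n => (Nat.card ↥((L : Set (Fin d → ℝ)) ∩ closedBall 0 ((n : ℝ) - c)) : ℝ)
    with hN
  have hNnonneg : ∀ n, 0 ≤ N n := fun n => Nat.cast_nonneg _
  have hcard : Fintype.card (Fin d) = d := Fintype.card_fin d
  have hev : ∀ᶠ n : ℕ in atTop, (1 : ℝ) ≤ (n : ℝ) ∧ c + R ≤ (n : ℝ) := by
    filter_upwards [eventually_ge_atTop (max 1 (Nat.ceil (c + R)))] with n hn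
    have h1 : (1:ℕ) ≤ n := le_trans (le_max_left _ _) hn
    have h2 : Nat.ceil (c + R) ≤ n := le_trans (le_max_right _ _) hn
    exact ⟨by exact_mod_cast h1, le_trans (Nat.le_ceil _) (by exact_mod_cast h2)⟩
  -- real bounds
  have hreal : ∀ᶠ n : ℕ in atTop,
      (2 * ((n : ℝ) - c - R)) ^ d ≤ N n * κ ∧ N n * κ ≤ (2 * ((n : ℝ) - c + R)) ^ d := by
    filter_upwards [hev] with n hn
    obtain ⟨hn1, hn2⟩ := hn
    set r : ℝ := (n : ℝ) - c with hrdef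
    have hrR : 0 ≤ r - R := by simp only [hrdef]; linarith
    have hrR' : 0 ≤ r + R := by linarith
    obtain ⟨hlo, hhi⟩ := hbound r
    have hvol_lo : volume (closedBall (0 : Fin d → ℝ) (r - R)) =
        ENNReal.ofReal ((2 * (r - R)) ^ d) := by
      rw [Real.volume_pi_closedBall 0 hrR, hcard]
    have hvol_hi : volume (closedBall (0 : Fin d → ℝ) (r + R)) =
        ENNReal.ofReal ((2 * (r + R)) ^ d) := by
      rw [Real.volume_pi_closedBall 0 hrR', hcard]
    have hfin : (Nat.card ↥((L : Set (Fin d → ℝ)) ∩ closedBall 0 r) : ENNReal) * volume D ≠ ⊤ :=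
      ENNReal.mul_ne_top (ENNReal.natCast_ne_top _) hDtop
    constructor
    · have := hvol_lo ▸ hlo
      have h2 := (ENNReal.ofReal_le_iff_le_toReal hfin).mp this
      rwa [ENNReal.toReal_mul, ENNReal.toReal_natCast] at h2
    · have := hvol_hi ▸ hhi
      have h2 := ENNReal.toReal_le_of_le_ofReal (by positivity) this
      rwa [ENNReal.toReal_mul, ENNReal.toReal_natCast] at h2
  -- squeeze
  have hmain : Tendsto (fun n : ℕ => N n * κ / (2 * (n : ℝ)) ^ d) atTop (nhds 1) := by
    have hlo_lim : Tendsto (fun n : ℕ => ((1 : ℝ) - (c + R)/(n:ℝ)) ^ d) atTop (nhds 1) := by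
      have := (tendsto_const_nhds (x := (1:ℝ)) (f := atTop (α := ℕ))).sub
        (tendsto_const_div_atTop_nhds_zero_nat (c + R))
      simpa using this.pow d
    have hhi_lim : Tendsto (fun n : ℕ => ((1 : ℝ) - (c - R)/(n:ℝ)) ^ d) atTop (nhds 1) := by
      have := (tendsto_const_nhds (x := (1:ℝ)) (f := atTop (α := ℕ))).sub
        (tendsto_const_div_atTop_nhds_zero_nat (c - R))
      simpa using this.pow d
    refine tendsto_of_tendsto_of_tendsto_of_le_of_le' hlo_lim hhi_lim ?_ ?_
    · filter_upwards [hreal, hev] with n hn hev'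
      have hn1 := hev'.1
      have hnpos : (0:ℝ) < (n:ℝ) := by linarith
      have key : ((1 : ℝ) - (c + R)/(n:ℝ)) ^ d = (2 * ((n:ℝ) - c - R)) ^ d / (2 * (n:ℝ)) ^ d := by
        rw [← div_pow]
        congr 1
        rw [mul_div_mul_left _ _ (two_ne_zero)]
        field_simp
        ring
      rw [key]
      exact div_le_div_of_nonneg_right hn.1 (by positivity) |>.trans_eq rfl
    · filter_upwards [hreal, hev] with n hn hev'
      have hn1 := hev'.1
      have hnpos : (0:ℝ) < (n:ℝ) := by linarith
      have key : ((1 : ℝ) - (c - R)/(n:ℝ)) ^ d = (2 * ((n:ℝ) - c + R)) ^ d / (2 * (n:ℝ)) ^ d := by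
        rw [← div_pow]
        congr 1
        rw [mul_div_mul_left _ _ (two_ne_zero)]
        field_simp
        ring
      rw [key]
      exact div_le_div_of_nonneg_right hn.2 (by positivity)
  have := hmain.mul (tendsto_const_nhds (x := κ⁻¹))
  rw [one_mul] at this
  refine this.congr (fun n => ?_)
  rw [div_mul_eq_mul_div, mul_assoc, mul_inv_cancel₀ (ne_of_gt hκpos), mul_one]

set_option maxHeartbeats 1000000 in
/-- Vague convergence of the normalised finite autocorrelations of a lattice Dirac comb:
for a lattice `L ⊆ ℝ^d` with fundamental domain `F` and centered cubes `Bₙ = [-n,n]^d`,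
for every continuous compactly supported `f : ℝ^d → ℂ`,
`(1/vol Bₙ) ∑_{x,y ∈ L ∩ Bₙ} f (x - y) → dens(L) ∑_{z ∈ L} f z`, where
`dens(L) = 1 / vol(F)`. -/
theorem lattice_autocorrelation {d : ℕ} (L : AddSubgroup (Fin d → ℝ))
    (hdisc : DiscreteTopology L) (hcompact : CompactSpace ((Fin d → ℝ) ⧸ L))
    (F : Set (Fin d → ℝ)) (hF : IsAddFundamentalDomain L F volume)
    (f : (Fin d → ℝ) → ℂ) (hcont : Continuous f) (hsupp : HasCompactSupport f) :
    Tendsto (fun n : ℕ =>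
        (1 / ((2 * n : ℝ) ^ d) : ℂ) *
          ∑' p : ↥((L : Set (Fin d → ℝ)) ∩ Set.pi Set.univ fun _ => Set.Icc (-(n : ℝ)) n) ×
                 ↥((L : Set (Fin d → ℝ)) ∩ Set.pi Set.univ fun _ => Set.Icc (-(n : ℝ)) n),
            f ((p.1 : Fin d → ℝ) - (p.2 : Fin d → ℝ)))
      atTop (nhds ((1 / ((volume F).toReal) : ℂ) * ∑' z : L, f z)) := by
  classical
  have hspan := aux_span_top L hcompact
  obtain ⟨D, hfund, hD0, hDtop, R, hRnn, hbound⟩ := aux_sandwich L hdisc hspan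
  set κ := (volume D).toReal with hκdef
  have hκpos : 0 < κ := ENNReal.toReal_pos hD0 hDtop
  haveI hcnt : Countable ↥L := by
    haveI : DiscreteTopology (AddSubgroup.toIntSubmodule L) := hdisc
    haveI : IsZLattice ℝ (AddSubgroup.toIntSubmodule L) :=
      ⟨by rwa [AddSubgroup.coe_toIntSubmodule]⟩
    exact (inferInstance : Countable (AddSubgroup.toIntSubmodule L))
  have hvolF : (volume F).toReal = κ := by rw [hF.measure_eq hfund]
  have hcube : ∀ n : ℕ, (Set.pi Set.univ fun _ : Fin d => Set.Icc (-(n : ℝ)) (n : ℝ)) =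
      closedBall (0 : Fin d → ℝ) n := by
    intro n
    rw [closedBall_pi _ (Nat.cast_nonneg n)]
    refine Set.pi_congr rfl fun i _ => ?_
    rw [Real.closedBall_eq_Icc]
    norm_num
  have hfin : ∀ r : ℝ, ((L : Set (Fin d → ℝ)) ∩ closedBall 0 r).Finite := by
    intro r
    have hcomp : IsCompact ((L : Set (Fin d → ℝ)) ∩ closedBall 0 r) :=
      (isCompact_closedBall _ _).inter_left L.isClosed_of_discrete
    exact hcomp.finite (isDiscrete_iff_discreteTopology.mpr (hdisc.of_subset Set.inter_subset_left))
  obtain ⟨A, hAmem⟩ : ∃ A : ℝ → Finset (Fin d → ℝ), ∀ r x, x ∈ A r ↔ x ∈ L ∧ ‖x‖ ≤ r := by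
    refine ⟨fun r => (hfin r).toFinset, fun r x => ?_⟩
    rw [Set.Finite.mem_toFinset]
    simp [mem_closedBall_zero_iff]
  have hAcoe : ∀ r : ℝ, ((L : Set (Fin d → ℝ)) ∩ closedBall 0 r) = ↑(A r) := by
    intro r
    ext x
    simp [hAmem, mem_closedBall_zero_iff]
  have hAcard : ∀ r : ℝ,
      (Nat.card ↥((L : Set (Fin d → ℝ)) ∩ closedBall 0 r) : ℝ) = ((A r).card : ℝ) := by
    intro r
    rw [Nat.card_coe_set_eq, hAcoe r, Set.ncard_coe_finset]
  have hT0 : ((L : Set (Fin d → ℝ)) ∩ tsupport f).Finite :=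
    (hsupp.inter_left L.isClosed_of_discrete).finite (isDiscrete_iff_discreteTopology.mpr (hdisc.of_subset Set.inter_subset_left))
  obtain ⟨T, hTmem⟩ : ∃ T : Finset (Fin d → ℝ), ∀ x, x ∈ T ↔ x ∈ L ∧ x ∈ tsupport f := by
    refine ⟨hT0.toFinset, fun x => ?_⟩
    rw [Set.Finite.mem_toFinset]
    rfl
  set Cnt : ℕ → (Fin d → ℝ) → ℕ := fun n z =>
    ((A n ×ˢ A n).filter (fun p => p.1 - p.2 = z)).card with hCnt
  -- Step 1: identify the tsum with a grouped finite sum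
  have step12 : ∀ n : ℕ,
      (∑' p : ↥((L : Set (Fin d → ℝ)) ∩ Set.pi Set.univ fun _ => Set.Icc (-(n : ℝ)) n) ×
              ↥((L : Set (Fin d → ℝ)) ∩ Set.pi Set.univ fun _ => Set.Icc (-(n : ℝ)) n),
          f ((p.1 : Fin d → ℝ) - (p.2 : Fin d → ℝ))) =
        ∑ z ∈ T, (Cnt n z : ℂ) * f z := by
    intro n
    rw [hcube n, hAcoe (n : ℝ)]
    rw [tsum_fintype, Fintype.sum_prod_type]
    calc ∑ x : ↥(↑(A (n:ℝ)) : Set (Fin d → ℝ)), ∑ y : ↥(↑(A (n:ℝ)) : Set (Fin d → ℝ)),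
          f ((x : Fin d → ℝ) - y)
        = ∑ x : ↥(↑(A (n:ℝ)) : Set (Fin d → ℝ)), ∑ y ∈ A (n:ℝ), f ((x : Fin d → ℝ) - y) := by
          refine Finset.sum_congr rfl fun x _ => ?_
          exact Finset.sum_finset_coe (f := fun y => f ((x : Fin d → ℝ) - y)) _
      _ = ∑ x ∈ A (n:ℝ), ∑ y ∈ A (n:ℝ), f (x - y) :=
          Finset.sum_finset_coe (f := fun x => ∑ y ∈ A (n:ℝ), f (x - y)) _
      _ = ∑ p ∈ A (n:ℝ) ×ˢ A (n:ℝ), f (p.1 - p.2) :=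
          (Finset.sum_product' (A (n:ℝ)) (A (n:ℝ)) (fun x y => f (x - y))).symm
      _ = ∑ p ∈ (A (n:ℝ) ×ˢ A (n:ℝ)).filter (fun p => p.1 - p.2 ∈ T), f (p.1 - p.2) := by
          refine (Finset.sum_filter_of_ne fun p hp hne => ?_).symm
          rw [Finset.mem_product] at hp
          refine (hTmem _).mpr ⟨sub_mem ((hAmem _ _).mp hp.1).1 ((hAmem _ _).mp hp.2).1, ?_⟩
          by_contra hns
          exact hne (image_eq_zero_of_notMem_tsupport hns)
      _ = ∑ z ∈ T, ∑ p ∈ (A (n:ℝ) ×ˢ A (n:ℝ)).filter (fun p => p.1 - p.2 = z), f (p.1 - p.2) :=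
          (Finset.sum_fiberwise_eq_sum_filter _ _ _ _).symm
      _ = ∑ z ∈ T, (Cnt n z : ℂ) * f z := by
          refine Finset.sum_congr rfl fun z hz => ?_
          have he : ∑ p ∈ (A (n:ℝ) ×ˢ A (n:ℝ)).filter (fun p => p.1 - p.2 = z), f (p.1 - p.2)
              = ∑ _p ∈ (A (n:ℝ) ×ˢ A (n:ℝ)).filter (fun p => p.1 - p.2 = z), f z :=
            Finset.sum_congr rfl fun p hp => by rw [(Finset.mem_filter.mp hp).2]
          rw [he, Finset.sum_const, nsmul_eq_mul]
  -- Step 2: sandwich for the pair counts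
  have step3 : ∀ z ∈ T, ∀ n : ℕ,
      (A ((n : ℝ) - ‖z‖)).card ≤ Cnt n z ∧ Cnt n z ≤ (A ((n : ℝ) - 0)).card := by
    intro z hz n
    have hzL : z ∈ L := ((hTmem z).mp hz).1
    constructor
    · refine Finset.card_le_card_of_injOn (fun y => (y + z, y)) ?_ ?_
      · intro y hy
        obtain ⟨hyL, hynorm⟩ := (hAmem _ _).mp hy
        have hz0 : (0:ℝ) ≤ ‖z‖ := norm_nonneg z
        refine Finset.mem_filter.mpr ⟨Finset.mem_product.mpr ⟨?_, ?_⟩, (by show y + z - y = z; exact add_sub_cancel_left y z)⟩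
        · refine (hAmem _ _).mpr ⟨add_mem hyL hzL, ?_⟩
          calc ‖y + z‖ ≤ ‖y‖ + ‖z‖ := norm_add_le _ _
            _ ≤ ((n : ℝ) - ‖z‖) + ‖z‖ := add_le_add_left hynorm _
            _ = (n : ℝ) := by ring
        · exact (hAmem _ _).mpr ⟨hyL, by linarith⟩
      · intro y1 _ y2 _ h
        exact (Prod.ext_iff.mp h).2
    · rw [sub_zero]
      refine Finset.card_le_card_of_injOn (fun p => p.2) ?_ ?_
      · intro p hp
        exact (Finset.mem_product.mp (Finset.mem_filter.mp hp).1).2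
      · intro p hp q hq h
        simp only [Finset.coe_filter, Set.mem_setOf_eq] at hp hq
        have hp2 := hp.2
        have hq2 := hq.2
        have h' : p.2 = q.2 := h
        have h1 : p.1 = z + p.2 := by rw [← hp2]; ring
        have h2 : q.1 = z + q.2 := by rw [← hq2]; ring
        have : p.1 = q.1 := by rw [h1, h2, h']
        exact Prod.ext this h'
  -- Step 3: per-z limit
  have step4 : ∀ z ∈ T, Tendsto (fun n : ℕ => (Cnt n z : ℝ) / (2 * (n : ℝ)) ^ d)
      atTop (nhds κ⁻¹) := by
    intro z hz
    have hlow := aux_tendsto L D hD0 hDtop R hRnn hbound ‖z‖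
    have hup := aux_tendsto L D hD0 hDtop R hRnn hbound 0
    refine tendsto_of_tendsto_of_tendsto_of_le_of_le' hlow hup ?_ ?_
    · filter_upwards [eventually_ge_atTop 1] with n hn
      have hnpos : (0:ℝ) < 2 * (n:ℝ) := by
        have : (1:ℝ) ≤ (n:ℝ) := by exact_mod_cast hn
        linarith
      have hd : (0:ℝ) < (2 * (n:ℝ)) ^ d := by positivity
      rw [hAcard]
      refine div_le_div_of_nonneg_right ?_ hd.le
      exact_mod_cast (step3 z hz n).1
    · filter_upwards [eventually_ge_atTop 1] with n hn
      have hnpos : (0:ℝ) < 2 * (n:ℝ) := by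
        have : (1:ℝ) ≤ (n:ℝ) := by exact_mod_cast hn
        linarith
      have hd : (0:ℝ) < (2 * (n:ℝ)) ^ d := by positivity
      rw [hAcard]
      refine div_le_div_of_nonneg_right ?_ hd.le
      exact_mod_cast (step3 z hz n).2
  -- Step 4: assemble
  have hfinal : Tendsto (fun n : ℕ => ∑ z ∈ T, f z * (((Cnt n z : ℝ) / (2 * (n : ℝ)) ^ d : ℝ) : ℂ))
      atTop (nhds (∑ z ∈ T, f z * ((κ⁻¹ : ℝ) : ℂ))) := by
    refine tendsto_finset_sum T fun z hz => ?_
    exact tendsto_const_nhds.mul ((Complex.continuous_ofReal.tendsto _).comp (step4 z hz))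
  have heq : ∀ n : ℕ,
      (1 / ((2 * n : ℝ) ^ d) : ℂ) * ∑ z ∈ T, (Cnt n z : ℂ) * f z =
      ∑ z ∈ T, f z * (((Cnt n z : ℝ) / (2 * (n : ℝ)) ^ d : ℝ) : ℂ) := by
    intro n
    rw [Finset.mul_sum]
    refine Finset.sum_congr rfl fun z hz => ?_
    push_cast
    ring
  have hlim_eq : (∑ z ∈ T, f z * ((κ⁻¹ : ℝ) : ℂ)) =
      (1 / ((volume F).toReal) : ℂ) * ∑' z : L, f z := by
    have htsum : (∑' z : L, f z) = ∑ z ∈ T, f z := by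
      have hinj : Set.InjOn ((↑·) : ↥L → Fin d → ℝ) (((↑·) : ↥L → Fin d → ℝ) ⁻¹' ↑T) :=
        Subtype.coe_injective.injOn
      rw [tsum_eq_sum (s := T.preimage _ hinj) ?_]
      · refine Finset.sum_preimage _ _ hinj _ fun x hx hnr => ?_
        exact absurd (⟨⟨x, ((hTmem x).mp hx).1⟩, rfl⟩ : x ∈ Set.range ((↑·) : ↥L → Fin d → ℝ)) hnr
      · intro z hzn
        rw [Finset.mem_preimage] at hzn
        refine image_eq_zero_of_notMem_tsupport fun hts => hzn ?_
        exact (hTmem _).mpr ⟨z.2, hts⟩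
    rw [htsum, hvolF, Finset.mul_sum]
    refine Finset.sum_congr rfl fun z _ => ?_
    push_cast
    ring
  rw [← hlim_eq]
  exact Tendsto.congr (fun n => (by rw [step12 n, heq n] : _)) hfinal
end

section
/- The set of period doubling positions D = ⋃_{j ≥ 0} (2·4^j ℤ + (4^j - 1)) is a disjoint union of the arithmetic progressions 2·4^j ℤ + (4^j - 1), and the density of D in ℤ exists and equals ∑_{j≥0} 1/(2·4^j) = 2/3. -/
open Filter

namespace PDaux

def S (j : ℕ) : Set ℤ := {z : ℤ | ∃ k : ℤ, z = 2 * 4 ^ j * k + 4 ^ j - 1}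

def A (j n : ℕ) : ℤ := -(((n : ℤ) + (4 ^ j - 1)) / (2 * 4 ^ j))
def B (j n : ℕ) : ℤ := ((n : ℤ) - (4 ^ j - 1)) / (2 * 4 ^ j)
noncomputable def F (j n : ℕ) : Finset ℤ :=
  (Finset.Icc (A j n) (B j n)).image (fun k => 2 * 4 ^ j * k + 4 ^ j - 1)

lemma hq (j : ℕ) : (0:ℤ) < 2 * 4 ^ j := by positivity

lemma card_F (j n : ℕ) : (F j n).card = (B j n + 1 - A j n).toNat := by
  rw [F, Finset.card_image_of_injective _ ?_, Int.card_Icc]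
  intro a b h
  dsimp only at h
  have h2 : (2 * 4 ^ j : ℤ) * a = 2 * 4 ^ j * b := by linarith
  exact mul_left_cancel₀ (ne_of_gt (hq j)) h2

lemma card_F_bounds (j n : ℕ) :
    ((F j n).card : ℝ) ≤ (n:ℝ)/4^j + 1 ∧ (n:ℝ)/4^j - 1 ≤ ((F j n).card : ℝ) := by
  have hB1 : B j n * (2 * 4 ^ j) ≤ (n : ℤ) - (4 ^ j - 1) :=
    (Int.le_ediv_iff_mul_le (hq j)).mp le_rfl
  have hB2 : (n : ℤ) - (4 ^ j - 1) < (B j n + 1) * (2 * 4 ^ j) :=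
    Int.lt_ediv_add_one_mul_self _ (hq j)
  have hA1 : (-(A j n)) * (2 * 4 ^ j) ≤ (n : ℤ) + (4 ^ j - 1) := by
    rw [A, neg_neg]
    exact (Int.le_ediv_iff_mul_le (hq j)).mp le_rfl
  have hA2 : (n : ℤ) + (4 ^ j - 1) < (-(A j n) + 1) * (2 * 4 ^ j) := by
    rw [A, neg_neg]
    exact Int.lt_ediv_add_one_mul_self _ (hq j)
  have hcard : ((F j n).card : ℤ) = (B j n + 1 - A j n).toNat := by
    rw [card_F]
  -- integer bounds
  have hup : (((F j n).card : ℤ) - 1) * 4 ^ j ≤ n := by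
    rcases le_or_gt 0 (B j n + 1 - A j n) with h | h
    · rw [hcard, Int.toNat_of_nonneg h]; nlinarith
    · have : ((F j n).card : ℤ) = 0 := by
        rw [hcard]
        simpa using Int.toNat_of_nonpos (le_of_lt h)
      rw [this]
      have := hq j
      nlinarith
  have hlo : (n : ℤ) < (((F j n).card : ℤ) + 1) * 4 ^ j := by
    have h1 : B j n + 1 - A j n ≤ ((F j n).card : ℤ) := by
      rw [hcard]; exact Int.self_le_toNat _
    have h4 : (0:ℤ) < 4 ^ j := by positivity
    nlinarith
  have h4r : (0:ℝ) < (4:ℝ) ^ j := by positivity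
  constructor
  · have h' : ((F j n).card : ℝ) - 1 ≤ (n:ℝ)/4^j := by
      rw [le_div_iff₀ h4r]; exact_mod_cast hup
    linarith
  · have h' : (n:ℝ)/4^j < ((F j n).card : ℝ) + 1 := by
      rw [div_lt_iff₀ h4r]; exact_mod_cast hlo
    linarith

def m (n : ℕ) : ℕ := Nat.log 4 n + 2

lemma n_lt_pow_m (n : ℕ) : n < 4 ^ m n := by
  have h1 : n < 4 ^ (Nat.log 4 n + 1) := Nat.lt_pow_succ_log_self (by norm_num) n
  have h2 : (4:ℕ) ^ (Nat.log 4 n + 1) ≤ 4 ^ (m n) :=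
    Nat.pow_le_pow_right (by norm_num) (by rw [m]; omega)
  omega

lemma sum_bound (n : ℕ) :
    |(∑ j ∈ Finset.range (m n), ((F j n).card : ℝ)) - 4*n/3| ≤ m n + 4/3 := by
  set M := m n with hM
  have hterm : ∀ j, |((F j n).card : ℝ) - (n:ℝ)/4^j| ≤ 1 := by
    intro j
    obtain ⟨h1, h2⟩ := card_F_bounds j n
    rw [abs_le]; constructor <;> linarith
  have hgeom : ∑ j ∈ Finset.range M, (n:ℝ)/4^j = (4/3) * n * (1 - (1/4:ℝ)^M) := by
    have h4 : ((1:ℝ)/4) ≠ 1 := by norm_num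
    have : ∑ j ∈ Finset.range M, (n:ℝ)/4^j
        = (n:ℝ) * ∑ j ∈ Finset.range M, ((1:ℝ)/4)^j := by
      rw [Finset.mul_sum]
      refine Finset.sum_congr rfl fun j _ => ?_
      rw [div_pow, one_pow, mul_one_div]
    rw [this, geom_sum_eq h4]
    ring
  have hE : (n:ℝ) * (1/4:ℝ)^M ≤ 1 := by
    have h1 : (n:ℝ) ≤ (4:ℝ)^M := by
      have := n_lt_pow_m n
      exact_mod_cast le_of_lt (by exact_mod_cast this : (n:ℕ) < 4 ^ M)
    have h4 : (0:ℝ) < (4:ℝ)^M := by positivity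
    rw [div_pow, one_pow, mul_one_div, div_le_one h4]
    exact h1
  have hEpos : (0:ℝ) ≤ (n:ℝ) * (1/4:ℝ)^M := by positivity
  have step1 : |(∑ j ∈ Finset.range M, ((F j n).card : ℝ))
      - ∑ j ∈ Finset.range M, (n:ℝ)/4^j| ≤ M := by
    rw [← Finset.sum_sub_distrib]
    calc |∑ j ∈ Finset.range M, (((F j n).card : ℝ) - (n:ℝ)/4^j)|
        ≤ ∑ j ∈ Finset.range M, |((F j n).card : ℝ) - (n:ℝ)/4^j| :=
          Finset.abs_sum_le_sum_abs _ _
      _ ≤ ∑ j ∈ Finset.range M, (1:ℝ) := Finset.sum_le_sum fun j _ => hterm j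
      _ = M := by simp
  have step2 : |(∑ j ∈ Finset.range M, (n:ℝ)/4^j) - 4*n/3| ≤ 4/3 := by
    rw [hgeom, abs_le]
    constructor <;> nlinarith
  calc |(∑ j ∈ Finset.range M, ((F j n).card : ℝ)) - 4*n/3|
      ≤ |(∑ j ∈ Finset.range M, ((F j n).card : ℝ))
          - ∑ j ∈ Finset.range M, (n:ℝ)/4^j|
        + |(∑ j ∈ Finset.range M, (n:ℝ)/4^j) - 4*n/3| := abs_sub_le _ _ _
    _ ≤ M + 4/3 := by linarith

lemma m_le_sqrt (n : ℕ) : (m n : ℝ) ≤ Real.sqrt n + 2 := by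
  have hlog : ((Nat.log 4 n : ℕ) : ℝ) ≤ Real.sqrt n := by
    rcases Nat.eq_zero_or_pos n with rfl | hn
    · simp
    · rw [Real.le_sqrt (by positivity) (by positivity)]
      have h1 : Nat.log 4 n < 2 ^ Nat.log 4 n := Nat.lt_two_pow_self
      have h2 : (2:ℕ) ^ Nat.log 4 n * 2 ^ Nat.log 4 n = 4 ^ Nat.log 4 n := by
        rw [← pow_add, show Nat.log 4 n + Nat.log 4 n = 2 * Nat.log 4 n by ring,
          pow_mul]; norm_num
      have h3 : (4:ℕ) ^ Nat.log 4 n ≤ n := Nat.pow_log_le_self 4 hn.ne'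
      have h4 : Nat.log 4 n ^ 2 ≤ n := by nlinarith
      exact_mod_cast h4
  rw [m]; push_cast; linarith

lemma Sdisj : Pairwise fun i j : ℕ => Disjoint (S i) (S j) := by
  have key : ∀ i j : ℕ, i < j → Disjoint (S i) (S j) := by
    intro i j hij
    rw [Set.disjoint_left]
    rintro z ⟨k, hk⟩ ⟨l, hl⟩
    have h4i : (0:ℤ) < 4 ^ i := by positivity
    have e : j = i + (j - i - 1) + 1 := by omega
    set d := j - i - 1 with hd
    have h4j : (4:ℤ) ^ j = 4 ^ i * (4 ^ d * 4) := by
      rw [e]; ring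
    rw [hk] at hl
    rw [h4j] at hl
    have hcancel : 2 * k + 1 = 2 * (4 ^ d * 4) * l + 4 ^ d * 4 := by
      have := hl
      have h2 : (4:ℤ) ^ i * (2 * k + 1) = 4 ^ i * (2 * (4 ^ d * 4) * l + 4 ^ d * 4) := by ring_nf; ring_nf at this; linarith
      exact mul_left_cancel₀ (ne_of_gt h4i) h2
    have : 2 * k + 1 = 2 * (4 ^ d * 4 * l + 4 ^ d * 2) := by rw [hcancel]; ring
    omega
  intro i j hij
  rcases lt_or_gt_of_ne hij with h | h
  · exact key i j h
  · exact (key j i h).symm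

lemma mem_F {j n : ℕ} {z : ℤ} :
    z ∈ F j n ↔ z ∈ S j ∧ z ∈ Set.Icc (-(n:ℤ)) (n:ℤ) := by
  simp only [F, A, B, Finset.mem_image, Finset.mem_Icc, S, Set.mem_setOf_eq, Set.mem_Icc]
  constructor
  · rintro ⟨k, ⟨hA, hB⟩, rfl⟩
    have h1 : k * (2 * 4 ^ j) ≤ (n : ℤ) - (4 ^ j - 1) :=
      (Int.le_ediv_iff_mul_le (hq j)).mp hB
    have h2 : (-k) * (2 * 4 ^ j) ≤ (n : ℤ) + (4 ^ j - 1) :=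
      (Int.le_ediv_iff_mul_le (hq j)).mp (by omega)
    exact ⟨⟨k, rfl⟩, by linarith, by linarith⟩
  · rintro ⟨⟨k, rfl⟩, hlo, hhi⟩
    refine ⟨k, ⟨?_, ?_⟩, rfl⟩
    · have : (-k) * (2 * 4 ^ j) ≤ (n : ℤ) + (4 ^ j - 1) := by linarith
      have := (Int.le_ediv_iff_mul_le (hq j)).mpr this
      omega
    · exact (Int.le_ediv_iff_mul_le (hq j)).mpr (by linarith)

lemma F_sub_S {j n : ℕ} : (↑(F j n) : Set ℤ) ⊆ S j := fun z hz => (mem_F.mp hz).1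

lemma lt_m_of_mem {j n : ℕ} {z : ℤ} (hz : z ∈ S j) (hlo : -(n:ℤ) ≤ z) (hhi : z ≤ n) :
    j < m n := by
  obtain ⟨k, rfl⟩ := hz
  have h4j : (0:ℤ) < 4 ^ j := by positivity
  -- 4^j ≤ n + 1
  have hle : (4:ℤ) ^ j ≤ (n:ℤ) + 1 := by
    rcases le_or_gt 0 k with hk | hk
    · nlinarith
    · nlinarith
  by_contra h
  push_neg at h
  have hmn : (n:ℤ) + 1 < 4 ^ (m n) := by
    have h1 : n < 4 ^ (Nat.log 4 n + 1) := Nat.lt_pow_succ_log_self (by norm_num) n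
    have h2 : (4:ℕ) ^ (m n) = 4 * 4 ^ (Nat.log 4 n + 1) := by rw [m]; ring
    have : n + 1 < 4 ^ (m n) := by omega
    exact_mod_cast this
  have : (4:ℤ) ^ (m n) ≤ 4 ^ j := pow_le_pow_right₀ (by norm_num) h
  linarith

lemma union_eq (n : ℕ) :
    (⋃ j : ℕ, S j) ∩ Set.Icc (-(n:ℤ)) (n:ℤ) =
      ↑((Finset.range (m n)).biUnion (fun j => F j n)) := by
  ext z
  simp only [Set.mem_inter_iff, Set.mem_iUnion, Finset.coe_biUnion, Finset.mem_coe,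
    Finset.mem_range, Set.mem_iUnion, Set.mem_Icc]
  constructor
  · rintro ⟨⟨j, hj⟩, hlo, hhi⟩
    exact ⟨j, lt_m_of_mem hj hlo hhi, mem_F.mpr ⟨hj, hlo, hhi⟩⟩
  · rintro ⟨j, _, hz⟩
    obtain ⟨hj, hlo, hhi⟩ := mem_F.mp hz
    exact ⟨⟨j, hj⟩, hlo, hhi⟩


lemma Ncard (n : ℕ) :
    (Nat.card ↥((⋃ j : ℕ, S j) ∩ Set.Icc (-(n:ℤ)) (n:ℤ)) : ℝ) =
      ∑ j ∈ Finset.range (m n), ((F j n).card : ℝ) := by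
  have hdisj : ∀ i ∈ Finset.range (m n), ∀ j ∈ Finset.range (m n), i ≠ j →
      Disjoint (F i n) (F j n) := by
    intro i _ j _ hij
    rw [← Finset.disjoint_coe]
    exact (Sdisj hij).mono F_sub_S F_sub_S
  rw [union_eq n, Nat.card_coe_set_eq, Set.ncard_coe_finset,
    Finset.card_biUnion hdisj]
  push_cast
  rfl

lemma key_bound (n : ℕ) :
    |(Nat.card ↥((⋃ j : ℕ, S j) ∩ Set.Icc (-(n:ℤ)) (n:ℤ)) : ℝ) / (2 * n + 1) - 2/3|
      ≤ (Real.sqrt n + 4) / (2 * n + 1) := by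
  have hpos : (0:ℝ) < 2 * n + 1 := by positivity
  rw [Ncard n]
  have h1 := sum_bound n
  have h2 := m_le_sqrt n
  have h3 : |(∑ j ∈ Finset.range (m n), ((F j n).card : ℝ)) - 2/3 * (2 * n + 1)|
      ≤ Real.sqrt n + 4 := by
    rw [abs_le] at h1 ⊢
    constructor <;> nlinarith
  have heq : (∑ j ∈ Finset.range (m n), ((F j n).card : ℝ)) / (2 * n + 1) - 2/3
      = ((∑ j ∈ Finset.range (m n), ((F j n).card : ℝ)) - 2/3 * (2 * n + 1))
        / (2 * n + 1) := by
    field_simp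
  rw [heq, abs_div, abs_of_pos hpos]
  gcongr

lemma err_tendsto :
    Tendsto (fun n : ℕ => (Real.sqrt n + 4) / (2 * n + 1)) atTop (nhds 0) := by
  have hrpow : Tendsto (fun n : ℕ => ((n:ℝ)) ^ (-(1/2) : ℝ)) atTop (nhds 0) :=
    (tendsto_rpow_neg_atTop (by norm_num)).comp tendsto_natCast_atTop_atTop
  apply squeeze_zero' (g := fun n : ℕ => ((n:ℝ)) ^ (-(1/2) : ℝ))
  · filter_upwards [eventually_ge_atTop 0] with n _
    positivity
  · filter_upwards [eventually_ge_atTop 16] with n hn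
    have hn' : (16:ℝ) ≤ n := by exact_mod_cast hn
    have hs : (4:ℝ) ≤ Real.sqrt n := by
      rw [show (4:ℝ) = Real.sqrt 16 by
        rw [show (16:ℝ) = 4^2 by norm_num, Real.sqrt_sq (by norm_num)]]
      exact Real.sqrt_le_sqrt hn'
    have hs0 : (0:ℝ) < Real.sqrt n := by linarith
    have hsq : Real.sqrt n * Real.sqrt n = n :=
      Real.mul_self_sqrt (by linarith)
    have hpow : ((n:ℝ)) ^ (-(1/2) : ℝ) = 1 / Real.sqrt n := by
      rw [Real.rpow_neg (by linarith), Real.sqrt_eq_rpow, one_div]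
      norm_num
    rw [hpow]
    rw [div_le_div_iff₀ (by positivity) hs0]
    nlinarith
  · exact hrpow

end PDaux

open PDaux in
/-- The period doubling positions `D = ⋃_{j ≥ 0} (2·4^j ℤ + (4^j - 1))` form a
disjoint union of arithmetic progressions, and the density of `D` in `ℤ` exists
and equals `∑_{j ≥ 0} 1/(2·4^j) = 2/3`. -/
theorem period_doubling_density :
    (Pairwise fun i j : ℕ =>
      Disjoint {z : ℤ | ∃ k : ℤ, z = 2 * 4 ^ i * k + 4 ^ i - 1}
        {z : ℤ | ∃ k : ℤ, z = 2 * 4 ^ j * k + 4 ^ j - 1}) ∧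
    Tendsto (fun n : ℕ =>
        (Nat.card ↥((⋃ j : ℕ, {z : ℤ | ∃ k : ℤ, z = 2 * 4 ^ j * k + 4 ^ j - 1}) ∩
            Set.Icc (-(n : ℤ)) (n : ℤ)) : ℝ) / (2 * n + 1))
      atTop (nhds (2 / 3)) := by
  constructor
  · exact Sdisj
  · rw [← tendsto_sub_nhds_zero_iff]
    exact squeeze_zero_norm
      (fun n => by simpa [Real.norm_eq_abs, S] using key_bound n) err_tendsto
end
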